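/- A point (x,y) ∈ ℝ^m × ℝ^n is a critical point of f if and only if at least one of the following holds: (a) x_i y_j = u_i v_j for all i = 1,…,m and j = 1,…,n; or (b) |Σ_{i : u_i ≠ 0} sgn(u_i) x_i| ≤ Σ_{i : u_i = 0} |x_i| and y = 0; or (c) x = 0 and |Σ_{j : v_j ≠ 0} sgn(v_j) y_j| ≤ Σ_{j : v_j = 0} |y_j|; or (d) Σ_{i : u_i ≠ 0} sgn(u_i) x_i = 0, Σ_{j : v_j ≠ 0} sgn(v_j) y_j = 0, x_i y_j / (u_i v_j) ≤ 1 whenever u_i v_j ≠ 0, x_i = 0 whenever u_i = 0, and y_j = 0 whenever v_j = 0. -/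

import Mathlib

open scoped Classical
open scoped Classical

/-- The set-valued sign function: `{-1}` for negative, `[-1,1]` at zero, `{1}` for positive. -/
noncomputable def signSet (t : ℝ) : Set ℝ :=
  if t < 0 then {-1} else if 0 < t then {1} else Set.Icc (-1) 1

lemma mem_signSet_iff {w l : ℝ} : l ∈ signSet w ↔ |l| ≤ 1 ∧ (w ≠ 0 → l = Real.sign w) := by
  unfold signSet
  rcases lt_trichotomy w 0 with h | h | h
  · rw [if_pos h, Real.sign_of_neg h]
    constructor
    · rintro rfl; exact ⟨by norm_num, fun _ => rfl⟩
    · rintro ⟨_, h2⟩; exact h2 h.ne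
  · subst h
    rw [if_neg (lt_irrefl _), if_neg (lt_irrefl _)]
    constructor
    · intro hl; exact ⟨abs_le.mpr hl, fun hc => absurd rfl hc⟩
    · rintro ⟨h1, _⟩; exact abs_le.mp h1
  · rw [if_neg (by linarith), if_pos h, Real.sign_of_pos h]
    constructor
    · rintro rfl; exact ⟨by norm_num, fun _ => rfl⟩
    · rintro ⟨_, h2⟩; exact h2 h.ne'

lemma signSet_abs_le {w l : ℝ} (h : l ∈ signSet w) : |l| ≤ 1 := (mem_signSet_iff.mp h).1

lemma signSet_mem_of_ne {w l : ℝ} (hw : w ≠ 0) (h : l ∈ signSet w) : l = Real.sign w :=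
  (mem_signSet_iff.mp h).2 hw

lemma signSet_mem_neg {w l : ℝ} (hw : w < 0) (h : l ∈ signSet w) : l = -1 := by
  rw [signSet_mem_of_ne hw.ne h, Real.sign_of_neg hw]

lemma signSet_mem_pos {w l : ℝ} (hw : 0 < w) (h : l ∈ signSet w) : l = 1 := by
  rw [signSet_mem_of_ne hw.ne' h, Real.sign_of_pos hw]

lemma signSet_arg_eq_zero {w l : ℝ} (h : l ∈ signSet w) (hl : |l| < 1) : w = 0 := by
  by_contra hw
  have := (mem_signSet_iff.mp h).2 hw
  rcases lt_trichotomy w 0 with h1 | h1 | h1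
  · rw [this, Real.sign_of_neg h1] at hl; norm_num at hl
  · exact hw h1
  · rw [this, Real.sign_of_pos h1] at hl; norm_num at hl

lemma mem_signSet_zero {c : ℝ} (hc : |c| ≤ 1) : c ∈ signSet 0 :=
  mem_signSet_iff.mpr ⟨hc, fun hc => absurd rfl hc⟩

lemma sign_mem_signSet (w : ℝ) : Real.sign w ∈ signSet w := by
  refine mem_signSet_iff.mpr ⟨?_, fun _ => rfl⟩
  rcases lt_trichotomy w 0 with h | h | h
  · rw [Real.sign_of_neg h]; norm_num
  · subst h; rw [Real.sign_zero]; norm_num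
  · rw [Real.sign_of_pos h]; norm_num

lemma real_sign_mul (a b : ℝ) : Real.sign (a * b) = Real.sign a * Real.sign b := by
  rcases lt_trichotomy a 0 with ha | ha | ha <;> rcases lt_trichotomy b 0 with hb | hb | hb
  · rw [Real.sign_of_pos (mul_pos_of_neg_of_neg ha hb), Real.sign_of_neg ha, Real.sign_of_neg hb]; norm_num
  · subst hb; simp [Real.sign_zero]
  · rw [Real.sign_of_neg (mul_neg_of_neg_of_pos ha hb), Real.sign_of_neg ha, Real.sign_of_pos hb]; norm_num
  · subst ha; simp [Real.sign_zero]
  · subst ha; simp [Real.sign_zero]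
  · subst ha; simp [Real.sign_zero]
  · rw [Real.sign_of_neg (mul_neg_of_pos_of_neg ha hb), Real.sign_of_pos ha, Real.sign_of_neg hb]; norm_num
  · subst hb; simp [Real.sign_zero]
  · rw [Real.sign_of_pos (mul_pos ha hb), Real.sign_of_pos ha, Real.sign_of_pos hb]; norm_num

lemma real_sign_neg (a : ℝ) : Real.sign (-a) = -Real.sign a := by
  rcases lt_trichotomy a 0 with h | h | h
  · rw [Real.sign_of_neg h, Real.sign_of_pos (by linarith)]; norm_num
  · subst h; simp [Real.sign_zero]
  · rw [Real.sign_of_pos h, Real.sign_of_neg (by linarith)]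

lemma abs_sign (a : ℝ) (ha : a ≠ 0) : |Real.sign a| = 1 := by
  rcases lt_trichotomy a 0 with h | h | h
  · rw [Real.sign_of_neg h]; norm_num
  · exact absurd h ha
  · rw [Real.sign_of_pos h]; norm_num

lemma rsign_mul_self (a : ℝ) : Real.sign a * a = |a| := by
  rcases lt_trichotomy a 0 with h | h | h
  · rw [Real.sign_of_neg h, abs_of_neg h]; ring
  · subst h; simp
  · rw [Real.sign_of_pos h, abs_of_pos h]; ring

lemma signSet_mul_eq_abs {w l : ℝ} (h : l ∈ signSet w) : l * w = |w| := by
  rcases eq_or_ne w 0 with hw | hw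
  · subst hw; simp
  · rw [signSet_mem_of_ne hw h, rsign_mul_self]

lemma signSet_unscale {c w l : ℝ} (hc : c ≠ 0) (h : l ∈ signSet (c * w)) :
    Real.sign c * l ∈ signSet w := by
  refine mem_signSet_iff.mpr ⟨?_, ?_⟩
  · rw [abs_mul, abs_sign c hc, one_mul]; exact signSet_abs_le h
  · intro hw
    have := signSet_mem_of_ne (mul_ne_zero hc hw) h
    rw [this, real_sign_mul, ← mul_assoc]
    have : Real.sign c * Real.sign c = 1 := by
      rcases lt_trichotomy c 0 with h1 | h1 | h1
      · rw [Real.sign_of_neg h1]; norm_num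
      · exact absurd h1 hc
      · rw [Real.sign_of_pos h1]; norm_num
    rw [this, one_mul]

section Core

variable {ι κ : Type*} [Fintype ι] [Fintype κ]
variable {α a : ι → ℝ} {β b : κ → ℝ} {σ : ι → κ → ℝ}

lemma core_agree (hβ : ∀ j, 0 < β j)
    (hmem : ∀ i j, σ i j ∈ signSet (a i * b j - 1))
    (hrow : ∀ i, ∑ j, β j * b j * σ i j = 0) :
    ∀ i i' j, a i' < a i → σ i j = σ i' j := by
  intro i i' j0 hlt
  have key : ∀ j, 0 ≤ β j * b j * (σ i j - σ i' j) := by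
    intro j
    have h1 := abs_le.mp (signSet_abs_le (hmem i j))
    have h2 := abs_le.mp (signSet_abs_le (hmem i' j))
    rcases lt_trichotomy (b j) 0 with hb | hb | hb
    · have hle : σ i j ≤ σ i' j := by
        rcases lt_or_ge (a i * b j) 1 with hc | hc
        · have := signSet_mem_neg (by linarith) (hmem i j)
          linarith [h2.1]
        · have hc2 : 1 < a i' * b j := by nlinarith
          have := signSet_mem_pos (by linarith) (hmem i' j)
          linarith [h1.2]
      have hbb : β j * b j ≤ 0 := by nlinarith [(hβ j).le]
      nlinarith
    · rw [hb]; ring_nf; simp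
    · have hle : σ i' j ≤ σ i j := by
        rcases lt_or_ge 1 (a i * b j) with hc | hc
        · have := signSet_mem_pos (by linarith) (hmem i j)
          linarith [h2.2]
        · have hc2 : a i' * b j < 1 := by nlinarith
          have := signSet_mem_neg (by linarith) (hmem i' j)
          linarith [h1.1]
      have hbb : 0 ≤ β j * b j := by nlinarith [(hβ j).le]
      nlinarith
  have hsum : ∑ j, β j * b j * (σ i j - σ i' j) = 0 := by
    have e : ∀ j : κ, β j * b j * (σ i j - σ i' j)
        = β j * b j * σ i j - β j * b j * σ i' j := fun j => by ring
    rw [Finset.sum_congr rfl (fun j _ => e j), Finset.sum_sub_distrib, hrow i, hrow i', sub_zero]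
  have hz : β j0 * b j0 * (σ i j0 - σ i' j0) = 0 :=
    (Finset.sum_eq_zero_iff_of_nonneg (fun j _ => key j)).mp hsum j0 (Finset.mem_univ _)
  rcases eq_or_ne (b j0) 0 with hb0 | hb0
  · have e1 : σ i j0 = -1 := signSet_mem_neg (by rw [hb0]; norm_num) (hmem i j0)
    have e2 : σ i' j0 = -1 := signSet_mem_neg (by rw [hb0]; norm_num) (hmem i' j0)
    rw [e1, e2]
  · rcases mul_eq_zero.mp hz with h | h
    · exact absurd h (mul_ne_zero (hβ j0).ne' hb0)
    · linarith

lemma core_agree_all (hβ : ∀ j, 0 < β j)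
    (hmem : ∀ i j, σ i j ∈ signSet (a i * b j - 1))
    (hrow : ∀ i, ∑ j, β j * b j * σ i j = 0)
    (hA : ∃ i1 i2, a i1 ≠ a i2) :
    ∀ i i' j, σ i j = σ i' j := by
  have pair : ∀ i i' j, a i ≠ a i' → σ i j = σ i' j := by
    intro i i' j h
    rcases h.lt_or_gt with h | h
    · exact (core_agree hβ hmem hrow i' i j h).symm
    · exact core_agree hβ hmem hrow i i' j h
  intro i i' j
  by_cases h : a i = a i'
  · obtain ⟨i1, i2, h12⟩ := hA
    by_cases h1 : a i1 = a i
    · have h2 : a i2 ≠ a i := fun hc => h12 (h1.trans hc.symm)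
      rw [pair i i2 j (fun hc => h2 hc.symm), pair i' i2 j (fun hc => h2 (h ▸ hc.symm))]
    · rw [pair i i1 j (fun hc => h1 hc.symm), pair i' i1 j (fun hc => h1 ((h ▸ hc).symm))]
  · exact pair i i' j h

lemma core_sumA (hβ : ∀ j, 0 < β j)
    (hmem : ∀ i j, σ i j ∈ signSet (a i * b j - 1))
    (hrow : ∀ i, ∑ j, β j * b j * σ i j = 0)
    (hcol : ∀ j, ∑ i, α i * a i * σ i j = 0)
    (hA : ∃ i1 i2, a i1 ≠ a i2) (hb : ∃ j, b j ≠ 0) :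
    ∑ i, α i * a i = 0 := by
  by_contra hS
  obtain ⟨i1, i2, h12⟩ := hA
  have hagree := core_agree_all hβ hmem hrow ⟨i1, i2, h12⟩
  have hzero : ∀ i j, σ i j = 0 := by
    intro i j
    have e : ∑ i', α i' * a i' * σ i' j = (∑ i', α i' * a i') * σ i j := by
      rw [Finset.sum_mul]
      exact Finset.sum_congr rfl fun i' _ => by rw [hagree i' i j]
    have h0 := hcol j
    rw [e] at h0
    exact (mul_eq_zero.mp h0).resolve_left hS
  have hone : ∀ i j, a i * b j = 1 := by
    intro i j
    have := signSet_arg_eq_zero (hmem i j) (by rw [hzero i j]; norm_num)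
    linarith
  obtain ⟨j0, hj0⟩ := hb
  exact h12 (mul_right_cancel₀ hj0 ((hone i1 j0).trans (hone i2 j0).symm))

lemma core_main (hα : ∀ i, 0 < α i) (hβ : ∀ j, 0 < β j)
    (hmem : ∀ i j, σ i j ∈ signSet (a i * b j - 1))
    (hrow : ∀ i, ∑ j, β j * b j * σ i j = 0)
    (hcol : ∀ j, ∑ i, α i * a i * σ i j = 0)
    (ha : ∃ i, a i ≠ 0) (hb : ∃ j, b j ≠ 0) :
    (∀ i j, a i * b j = 1) ∨
      ((∑ i, α i * a i) = 0 ∧ (∑ j, β j * b j) = 0 ∧ ∀ i j, a i * b j ≤ 1) := by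
  obtain ⟨i0, hi0⟩ := ha
  obtain ⟨j0, hj0⟩ := hb
  have hι : Nonempty ι := ⟨i0⟩
  have hκ : Nonempty κ := ⟨j0⟩
  have hαpos : (0:ℝ) < ∑ i, α i := Finset.sum_pos (fun i _ => hα i) Finset.univ_nonempty
  have hβpos : (0:ℝ) < ∑ j, β j := Finset.sum_pos (fun j _ => hβ j) Finset.univ_nonempty
  have hmem' : ∀ (j : κ) (i : ι), σ i j ∈ signSet (b j * a i - 1) := by
    intro j i; rw [mul_comm]; exact hmem i j
  by_cases hA : ∃ i1 i2, a i1 ≠ a i2 <;> by_cases hB : ∃ j1 j2, b j1 ≠ b j2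
  · -- A ∩ B
    have hSa := core_sumA hβ hmem hrow hcol hA ⟨j0, hj0⟩
    have hSb := core_sumA (σ := fun j i => σ i j) hα hmem' hcol hrow hB ⟨i0, hi0⟩
    refine Or.inr ⟨hSa, hSb, ?_⟩
    by_contra hc
    push_neg at hc
    obtain ⟨i1, j1, hgt⟩ := hc
    have h1 : σ i1 j1 = 1 := signSet_mem_pos (by linarith) (hmem i1 j1)
    have hge : ∀ i, 1 ≤ a i * b j1 := by
      intro i
      have he : σ i j1 = 1 := (core_agree_all hβ hmem hrow hA i i1 j1).trans h1
      by_contra hlt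
      push_neg at hlt
      have := signSet_mem_neg (by linarith) (hmem i j1)
      rw [he] at this; norm_num at this
    have hbig : (∑ i, α i) ≤ (∑ i, α i * a i) * b j1 := by
      rw [Finset.sum_mul]
      apply Finset.sum_le_sum
      intro i _
      have h3 := hge i
      have h4 := hα i
      nlinarith
    rw [hSa, zero_mul] at hbig
    linarith
  · -- A ∩ ¬B : False
    exfalso
    push_neg at hB
    have hb0 : ∀ j, b j = b j0 := fun j => hB j j0
    have hSa := core_sumA hβ hmem hrow hcol hA ⟨j0, hj0⟩
    by_cases hlt : ∃ i, a i * b j0 < 1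
    · obtain ⟨i1, h1⟩ := hlt
      have hneg : ∀ j, σ i1 j = -1 := fun j =>
        signSet_mem_neg (by rw [hb0 j]; linarith) (hmem i1 j)
      have e : ∑ j, β j * b j * σ i1 j = (∑ j, β j) * (-(b j0)) := by
        rw [Finset.sum_mul]
        exact Finset.sum_congr rfl fun j _ => by rw [hneg j, hb0 j]; ring
      rw [hrow i1] at e
      rcases mul_eq_zero.mp e.symm with h | h
      · linarith
      · exact hj0 (by linarith)
    · push_neg at hlt
      have hbig : (∑ i, α i) ≤ (∑ i, α i * a i) * b j0 := by
        rw [Finset.sum_mul]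
        apply Finset.sum_le_sum
        intro i _
        have h3 := hlt i
        have h4 := hα i
        nlinarith
      rw [hSa, zero_mul] at hbig
      linarith
  · -- ¬A ∩ B : False
    exfalso
    push_neg at hA
    have ha0 : ∀ i, a i = a i0 := fun i => hA i i0
    have hSb := core_sumA (σ := fun j i => σ i j) hα hmem' hcol hrow hB ⟨i0, hi0⟩
    by_cases hlt : ∃ j, a i0 * b j < 1
    · obtain ⟨j1, h1⟩ := hlt
      have hneg : ∀ i, σ i j1 = -1 := fun i =>
        signSet_mem_neg (by rw [ha0 i]; linarith) (hmem i j1)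
      have e : ∑ i, α i * a i * σ i j1 = (∑ i, α i) * (-(a i0)) := by
        rw [Finset.sum_mul]
        exact Finset.sum_congr rfl fun i _ => by rw [hneg i, ha0 i]; ring
      rw [hcol j1] at e
      rcases mul_eq_zero.mp e.symm with h | h
      · linarith
      · exact hi0 (by linarith)
    · push_neg at hlt
      have hbig : (∑ j, β j) ≤ (∑ j, β j * b j) * a i0 := by
        rw [Finset.sum_mul]
        apply Finset.sum_le_sum
        intro j _
        have h3 := hlt j
        have h4 := hβ j
        nlinarith
      rw [hSb, zero_mul] at hbig
      linarith
  · -- ¬A ∩ ¬B : all products 1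
    push_neg at hA hB
    have key : a i0 * b j0 = 1 := by
      by_contra hne
      rcases lt_or_gt_of_ne hne with hlt | hgt
      · have hneg : ∀ j, σ i0 j = -1 := fun j =>
          signSet_mem_neg (by rw [hB j j0]; linarith) (hmem i0 j)
        have e : ∑ j, β j * b j * σ i0 j = (∑ j, β j) * (-(b j0)) := by
          rw [Finset.sum_mul]
          exact Finset.sum_congr rfl fun j _ => by rw [hneg j, hB j j0]; ring
        rw [hrow i0] at e
        rcases mul_eq_zero.mp e.symm with h | h
        · linarith
        · exact hj0 (by linarith)
      · have hpos : ∀ j, σ i0 j = 1 := fun j =>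
          signSet_mem_pos (by rw [hB j j0]; linarith) (hmem i0 j)
        have e : ∑ j, β j * b j * σ i0 j = (∑ j, β j) * (b j0) := by
          rw [Finset.sum_mul]
          exact Finset.sum_congr rfl fun j _ => by rw [hpos j, hB j j0]; ring
        rw [hrow i0] at e
        rcases mul_eq_zero.mp e.symm with h | h
        · linarith
        · exact hj0 h
    exact Or.inl fun i j => by rw [hA i i0, hB j j0, key]

end Core

def IsCrit {m n : ℕ} (u x : Fin m → ℝ) (v y : Fin n → ℝ) : Prop :=
  ∃ Λ : Matrix (Fin m) (Fin n) ℝ,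
      (∀ i j, Λ i j ∈ signSet (x i * y j - u i * v j)) ∧
      (∀ i, ∑ j, Λ i j * y j = 0) ∧ (∀ j, ∑ i, Λ i j * x i = 0)

lemma isCrit_swap {m n : ℕ} {u x : Fin m → ℝ} {v y : Fin n → ℝ}
    (h : IsCrit u x v y) : IsCrit v y u x := by
  obtain ⟨Λ, h1, h2, h3⟩ := h
  refine ⟨fun j i => Λ i j, fun j i => ?_, h3, h2⟩
  have e : y j * x i - v j * u i = x i * y j - u i * v j := by ring
  rw [e]
  exact h1 i j

lemma supp_zero {m n : ℕ} {u x : Fin m → ℝ} {v y : Fin n → ℝ}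
    (h : IsCrit u x v y) (hy : y ≠ 0) : ∀ i, u i = 0 → x i = 0 := by
  obtain ⟨Λ, h1, h2, _⟩ := h
  intro i hui
  by_contra hxi
  have hs : ∑ j, |x i * y j| = 0 := by
    have e : ∀ j, |x i * y j| = x i * (Λ i j * y j) := by
      intro j
      have hm := h1 i j
      rw [hui, zero_mul, sub_zero] at hm
      rw [← signSet_mul_eq_abs hm]; ring
    rw [Finset.sum_congr rfl (fun j _ => e j), ← Finset.mul_sum, h2 i, mul_zero]
  apply hy
  funext j
  have hz := (Finset.sum_eq_zero_iff_of_nonneg (fun j _ => abs_nonneg _)).mp hs j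
    (Finset.mem_univ j)
  rcases mul_eq_zero.mp (abs_eq_zero.mp hz) with h | h
  · exact absurd h hxi
  · exact h

lemma fwd_y0 {m n : ℕ} {u x : Fin m → ℝ} {v y : Fin n → ℝ}
    (h : IsCrit u x v y) (hy : y = 0) :
    (∀ i j, x i * y j = u i * v j) ∨
      |∑ i ∈ Finset.univ.filter (fun i => u i ≠ 0), Real.sign (u i) * x i|
        ≤ ∑ i ∈ Finset.univ.filter (fun i => u i = 0), |x i| := by
  subst hy
  by_cases hv : v = 0
  · left; intro i j; simp [hv]
  · right
    obtain ⟨j0, hj0⟩ := Function.ne_iff.mp hv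
    simp only [Pi.zero_apply] at hj0
    obtain ⟨Λ, h1, _, h3⟩ := h
    set S := ∑ i ∈ Finset.univ.filter (fun i => u i ≠ 0), Real.sign (u i) * x i with hS
    have hsplit := Finset.sum_filter_add_sum_filter_not Finset.univ (fun i => u i ≠ 0)
      (fun i => Λ i j0 * x i)
    simp only [ne_eq, not_not] at hsplit
    have e1 : ∑ i ∈ Finset.univ.filter (fun i => u i ≠ 0), Λ i j0 * x i
        = Real.sign (v j0) * (-S) := by
      have e0 : Real.sign (v j0) * (-S)
          = ∑ i ∈ Finset.univ.filter (fun i => u i ≠ 0),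
              Real.sign (v j0) * (-(Real.sign (u i) * x i)) := by
        rw [hS, ← Finset.sum_neg_distrib, Finset.mul_sum]
      rw [e0]
      apply Finset.sum_congr rfl
      intro i hi
      have hui : u i ≠ 0 := by simpa using (Finset.mem_filter.mp hi).2
      have hm := h1 i j0
      simp only [Pi.zero_apply, mul_zero, zero_sub] at hm
      have hΛ : Λ i j0 = Real.sign (-(u i * v j0)) :=
        signSet_mem_of_ne (neg_ne_zero.mpr (mul_ne_zero hui hj0)) hm
      rw [hΛ, real_sign_neg, real_sign_mul]
      ring
    have hcol := h3 j0
    rw [← hsplit, e1] at hcol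
    have hR : Real.sign (v j0) * S = ∑ i ∈ Finset.univ.filter (fun i => u i = 0), Λ i j0 * x i := by
      linarith
    calc |S| = |Real.sign (v j0) * S| := by rw [abs_mul, abs_sign _ hj0, one_mul]
      _ = |∑ i ∈ Finset.univ.filter (fun i => u i = 0), Λ i j0 * x i| := by rw [hR]
      _ ≤ ∑ i ∈ Finset.univ.filter (fun i => u i = 0), |Λ i j0 * x i| :=
          Finset.abs_sum_le_sum_abs _ _
      _ ≤ ∑ i ∈ Finset.univ.filter (fun i => u i = 0), |x i| := by
          apply Finset.sum_le_sum
          intro i hi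
          have hui : u i = 0 := by simpa using (Finset.mem_filter.mp hi).2
          have hm := h1 i j0
          simp only [Pi.zero_apply, mul_zero, hui, zero_mul, sub_zero] at hm
          have := signSet_abs_le hm
          rw [abs_mul]
          exact mul_le_of_le_one_left (abs_nonneg _) this

lemma abs_sign_le (a : ℝ) : |Real.sign a| ≤ 1 := by
  rcases lt_trichotomy a 0 with h | h | h
  · rw [Real.sign_of_neg h]; norm_num
  · subst h; rw [Real.sign_zero]; norm_num
  · rw [Real.sign_of_pos h]; norm_num

lemma bwd_y0 {m n : ℕ} {u x : Fin m → ℝ} {v : Fin n → ℝ}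
    (hS : |∑ i ∈ Finset.univ.filter (fun i => u i ≠ 0), Real.sign (u i) * x i|
        ≤ ∑ i ∈ Finset.univ.filter (fun i => u i = 0), |x i|) :
    IsCrit u x v 0 := by
  set S := ∑ i ∈ Finset.univ.filter (fun i => u i ≠ 0), Real.sign (u i) * x i with hSdef
  set T := ∑ i ∈ Finset.univ.filter (fun i => u i = 0), |x i| with hTdef
  have hT0 : 0 ≤ T := Finset.sum_nonneg fun i _ => abs_nonneg _
  set c : ℝ := if T = 0 then 0 else S / T with hc
  have hc1 : |c| ≤ 1 := by
    rw [hc]; split_ifs with h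
    · simp
    · have hTpos : 0 < T := lt_of_le_of_ne hT0 (Ne.symm h)
      rw [abs_div, abs_of_pos hTpos, div_le_one hTpos]
      exact hS
  have hcT : c * T = S := by
    rw [hc]; split_ifs with h
    · rw [h, mul_zero]
      have h2 : |S| ≤ 0 := h ▸ hS
      exact (abs_eq_zero.mp (le_antisymm h2 (abs_nonneg S))).symm
    · field_simp
  refine ⟨fun i j => if u i = 0 then (if v j = 0 then 0
      else Real.sign (v j) * (c * Real.sign (x i)))
      else (if v j = 0 then 0 else -(Real.sign (u i) * Real.sign (v j))), ?_, ?_, ?_⟩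
  · intro i j
    have hd : x i * (0 : Fin n → ℝ) j - u i * v j = -(u i * v j) := by simp
    dsimp only
    rw [hd]
    by_cases hui : u i = 0 <;> by_cases hvj : v j = 0
    · rw [if_pos hui, if_pos hvj, hui, zero_mul, neg_zero]
      exact mem_signSet_zero (by norm_num)
    · rw [if_pos hui, if_neg hvj, hui, zero_mul, neg_zero]
      apply mem_signSet_zero
      rw [abs_mul, abs_mul]
      calc |Real.sign (v j)| * (|c| * |Real.sign (x i)|) ≤ 1 * (1 * 1) := by
            apply mul_le_mul (abs_sign_le _) ?_ (by positivity) (by norm_num)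
            apply mul_le_mul hc1 (abs_sign_le _) (abs_nonneg _) (by norm_num)
        _ = 1 := by norm_num
    · rw [if_neg hui, if_pos hvj, hvj, mul_zero, neg_zero]
      exact mem_signSet_zero (by norm_num)
    · rw [if_neg hui, if_neg hvj]
      have e : -(Real.sign (u i) * Real.sign (v j)) = Real.sign (-(u i * v j)) := by
        rw [real_sign_neg, real_sign_mul]
      rw [e]
      exact sign_mem_signSet _
  · intro i; simp
  · intro j
    by_cases hvj : v j = 0
    · apply Finset.sum_eq_zero
      intro i _
      by_cases hui : u i = 0 <;> simp [hui, hvj]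
    · have hsplit := Finset.sum_filter_add_sum_filter_not Finset.univ (fun i => u i ≠ 0)
        (fun i => (if u i = 0 then (if v j = 0 then 0
          else Real.sign (v j) * (c * Real.sign (x i)))
          else (if v j = 0 then 0 else -(Real.sign (u i) * Real.sign (v j)))) * x i)
      simp only [ne_eq, not_not] at hsplit
      rw [← hsplit]
      have eA : ∑ i ∈ Finset.univ.filter (fun i => u i ≠ 0),
          (if u i = 0 then (if v j = 0 then 0 else Real.sign (v j) * (c * Real.sign (x i)))
            else (if v j = 0 then 0 else -(Real.sign (u i) * Real.sign (v j)))) * x i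
          = -(Real.sign (v j) * S) := by
        have e0 : -(Real.sign (v j) * S) = ∑ i ∈ Finset.univ.filter (fun i => u i ≠ 0),
            -(Real.sign (v j) * (Real.sign (u i) * x i)) := by
          rw [hSdef, Finset.mul_sum, ← Finset.sum_neg_distrib]
        rw [e0]
        apply Finset.sum_congr rfl
        intro i hi
        have hui : u i ≠ 0 := by simpa using (Finset.mem_filter.mp hi).2
        rw [if_neg hui, if_neg hvj]
        ring
      have eB : ∑ i ∈ Finset.univ.filter (fun i => u i = 0),
          (if u i = 0 then (if v j = 0 then 0 else Real.sign (v j) * (c * Real.sign (x i)))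
            else (if v j = 0 then 0 else -(Real.sign (u i) * Real.sign (v j)))) * x i
          = Real.sign (v j) * S := by
        have e0 : ∀ i ∈ Finset.univ.filter (fun i => u i = 0),
            (if u i = 0 then (if v j = 0 then 0 else Real.sign (v j) * (c * Real.sign (x i)))
              else (if v j = 0 then 0 else -(Real.sign (u i) * Real.sign (v j)))) * x i
            = Real.sign (v j) * (c * |x i|) := by
          intro i hi
          have hui : u i = 0 := by simpa using (Finset.mem_filter.mp hi).2
          rw [if_pos hui, if_neg hvj, ← rsign_mul_self (x i)]
          ring
        rw [Finset.sum_congr rfl e0, ← Finset.mul_sum, ← Finset.mul_sum, ← hTdef, hcT]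
      rw [eA, eB]
      ring

/-- `(x,y)` is a critical point of `f(x,y) = Σᵢ Σⱼ |xᵢ yⱼ − uᵢ vⱼ|` if and
only if one of the four conditions (a)-(d) of Lemma 2 holds. -/
theorem critical_point_characterization (m n : ℕ) (hm : 1 ≤ m) (hn : 1 ≤ n)
    (u x : Fin m → ℝ) (v y : Fin n → ℝ) :
    (∃ Λ : Matrix (Fin m) (Fin n) ℝ,
      (∀ i j, Λ i j ∈ signSet (x i * y j - u i * v j)) ∧
      (∀ i, ∑ j, Λ i j * y j = 0) ∧ (∀ j, ∑ i, Λ i j * x i = 0))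
    ↔
    ((∀ i j, x i * y j = u i * v j) ∨
      (|∑ i ∈ Finset.univ.filter (fun i => u i ≠ 0), Real.sign (u i) * x i|
          ≤ (∑ i ∈ Finset.univ.filter (fun i => u i = 0), |x i|) ∧ y = 0) ∨
      (x = 0 ∧
        |∑ j ∈ Finset.univ.filter (fun j => v j ≠ 0), Real.sign (v j) * y j|
          ≤ ∑ j ∈ Finset.univ.filter (fun j => v j = 0), |y j|) ∨
      ((∑ i ∈ Finset.univ.filter (fun i => u i ≠ 0), Real.sign (u i) * x i) = 0 ∧
        (∑ j ∈ Finset.univ.filter (fun j => v j ≠ 0), Real.sign (v j) * y j) = 0 ∧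
        (∀ i j, u i * v j ≠ 0 → x i * y j / (u i * v j) ≤ 1) ∧
        (∀ i, u i = 0 → x i = 0) ∧ (∀ j, v j = 0 → y j = 0))) := by
  constructor
  · intro h
    have hC : IsCrit u x v y := h
    by_cases hy : y = 0
    · rcases fwd_y0 hC hy with hA | hB
      · exact Or.inl hA
      · exact Or.inr (Or.inl ⟨hB, hy⟩)
    by_cases hx : x = 0
    · rcases fwd_y0 (isCrit_swap hC) hx with hA | hB
      · refine Or.inl fun i j => ?_
        have := hA j i
        calc x i * y j = y j * x i := mul_comm _ _
          _ = v j * u i := this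
          _ = u i * v j := mul_comm _ _
      · exact Or.inr (Or.inr (Or.inl ⟨hx, hB⟩))
    · -- main case : x ≠ 0, y ≠ 0
      have hx0 : ∀ i, u i = 0 → x i = 0 := supp_zero hC hy
      have hy0 : ∀ j, v j = 0 → y j = 0 := supp_zero (isCrit_swap hC) hx
      obtain ⟨Λ, h1, h2, h3⟩ := hC
      obtain ⟨i1, hxi1⟩ := Function.ne_iff.mp hx
      obtain ⟨j1, hyj1⟩ := Function.ne_iff.mp hy
      simp only [Pi.zero_apply] at hxi1 hyj1
      have hui1 : u i1 ≠ 0 := fun h => hxi1 (hx0 i1 h)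
      have hvj1 : v j1 ≠ 0 := fun h => hyj1 (hy0 j1 h)
      have hmemc : ∀ (i : {i : Fin m // u i ≠ 0}) (j : {j : Fin n // v j ≠ 0}),
          Real.sign (u i.1) * Real.sign (v j.1) * Λ i.1 j.1
            ∈ signSet (x i.1 / u i.1 * (y j.1 / v j.1) - 1) := by
        intro i j
        have huv : u i.1 * v j.1 ≠ 0 := mul_ne_zero i.2 j.2
        have hdiff : x i.1 * y j.1 - u i.1 * v j.1
            = (u i.1 * v j.1) * (x i.1 / u i.1 * (y j.1 / v j.1) - 1) := by
          rw [div_mul_div_comm, mul_sub, ← mul_div_assoc, mul_div_cancel_left₀ _ huv, mul_one]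
        have hm := h1 i.1 j.1
        rw [hdiff] at hm
        have h4 := signSet_unscale huv hm
        rw [real_sign_mul] at h4
        exact h4
      have hrowc : ∀ i : {i : Fin m // u i ≠ 0},
          ∑ j : {j : Fin n // v j ≠ 0},
            |v j.1| * (y j.1 / v j.1) * (Real.sign (u i.1) * Real.sign (v j.1) * Λ i.1 j.1)
              = 0 := by
        intro i
        have e : ∀ j : {j : Fin n // v j ≠ 0},
            |v j.1| * (y j.1 / v j.1) * (Real.sign (u i.1) * Real.sign (v j.1) * Λ i.1 j.1)
              = Real.sign (u i.1) * (Λ i.1 j.1 * y j.1) := by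
          intro j
          have hc : v j.1 * (v j.1)⁻¹ = 1 := mul_inv_cancel₀ j.2
          rcases lt_trichotomy (v j.1) 0 with hv1 | hv1 | hv1
          · rw [abs_of_neg hv1, Real.sign_of_neg hv1]
            linear_combination (y j.1 * Real.sign (u i.1) * Λ i.1 j.1) * hc
          · exact absurd hv1 j.2
          · rw [abs_of_pos hv1, Real.sign_of_pos hv1]
            linear_combination (y j.1 * Real.sign (u i.1) * Λ i.1 j.1) * hc
        rw [Finset.sum_congr rfl (fun j _ => e j), ← Finset.mul_sum]
        have esum : ∑ j : {j : Fin n // v j ≠ 0}, Λ i.1 j.1 * y j.1 = ∑ j, Λ i.1 j * y j := by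
          rw [← Finset.sum_subtype (Finset.univ.filter (fun j => v j ≠ 0)) (by simp)
            (fun j => Λ i.1 j * y j)]
          apply Finset.sum_subset (Finset.filter_subset _ _)
          intro j _ hj
          have hvz : v j = 0 := by simpa using hj
          rw [hy0 j hvz, mul_zero]
        rw [esum, h2 i.1, mul_zero]
      have hcolc : ∀ j : {j : Fin n // v j ≠ 0},
          ∑ i : {i : Fin m // u i ≠ 0},
            |u i.1| * (x i.1 / u i.1) * (Real.sign (u i.1) * Real.sign (v j.1) * Λ i.1 j.1)
              = 0 := by
        intro j
        have e : ∀ i : {i : Fin m // u i ≠ 0},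
            |u i.1| * (x i.1 / u i.1) * (Real.sign (u i.1) * Real.sign (v j.1) * Λ i.1 j.1)
              = Real.sign (v j.1) * (Λ i.1 j.1 * x i.1) := by
          intro i
          have hc : u i.1 * (u i.1)⁻¹ = 1 := mul_inv_cancel₀ i.2
          rcases lt_trichotomy (u i.1) 0 with hu1 | hu1 | hu1
          · rw [abs_of_neg hu1, Real.sign_of_neg hu1]
            linear_combination (x i.1 * Real.sign (v j.1) * Λ i.1 j.1) * hc
          · exact absurd hu1 i.2
          · rw [abs_of_pos hu1, Real.sign_of_pos hu1]
            linear_combination (x i.1 * Real.sign (v j.1) * Λ i.1 j.1) * hc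
        rw [Finset.sum_congr rfl (fun i _ => e i), ← Finset.mul_sum]
        have esum : ∑ i : {i : Fin m // u i ≠ 0}, Λ i.1 j.1 * x i.1 = ∑ i, Λ i j.1 * x i := by
          rw [← Finset.sum_subtype (Finset.univ.filter (fun i => u i ≠ 0)) (by simp)
            (fun i => Λ i j.1 * x i)]
          apply Finset.sum_subset (Finset.filter_subset _ _)
          intro i _ hi
          have huz : u i = 0 := by simpa using hi
          rw [hx0 i huz, mul_zero]
        rw [esum, h3 j.1, mul_zero]
      have hkey := core_main (α := fun i : {i : Fin m // u i ≠ 0} => |u i.1|)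
        (a := fun i : {i : Fin m // u i ≠ 0} => x i.1 / u i.1)
        (β := fun j : {j : Fin n // v j ≠ 0} => |v j.1|)
        (b := fun j : {j : Fin n // v j ≠ 0} => y j.1 / v j.1)
        (σ := fun i j => Real.sign (u i.1) * Real.sign (v j.1) * Λ i.1 j.1)
        (fun i => abs_pos.mpr i.2) (fun j => abs_pos.mpr j.2)
        hmemc hrowc hcolc
        ⟨⟨i1, hui1⟩, div_ne_zero hxi1 hui1⟩ ⟨⟨j1, hvj1⟩, div_ne_zero hyj1 hvj1⟩
      rcases hkey with hall | ⟨hSa, hSb, hle⟩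
      · refine Or.inl fun i j => ?_
        by_cases hui : u i = 0
        · rw [hx0 i hui, hui, zero_mul, zero_mul]
        by_cases hvj : v j = 0
        · rw [hy0 j hvj, hvj, mul_zero, mul_zero]
        · have := hall ⟨i, hui⟩ ⟨j, hvj⟩
          field_simp at this
          linarith
      · refine Or.inr (Or.inr (Or.inr ⟨?_, ?_, ?_, hx0, hy0⟩))
        · rw [Finset.sum_congr rfl (fun i hi => ?_), Finset.sum_subtype
            (p := fun i => u i ≠ 0) (Finset.univ.filter (fun i => u i ≠ 0)) (by simp)
            (fun i => |u i| * (x i / u i))]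
          · exact hSa
          · have hui : u i ≠ 0 := by simpa using (Finset.mem_filter.mp hi).2
            have hc : u i * (u i)⁻¹ = 1 := mul_inv_cancel₀ hui
            rcases lt_trichotomy (u i) 0 with hu1 | hu1 | hu1
            · rw [abs_of_neg hu1, Real.sign_of_neg hu1]
              linear_combination (x i) * hc
            · exact absurd hu1 hui
            · rw [abs_of_pos hu1, Real.sign_of_pos hu1]
              linear_combination (-(x i)) * hc
        · rw [Finset.sum_congr rfl (fun j hj => ?_), Finset.sum_subtype
            (p := fun j => v j ≠ 0) (Finset.univ.filter (fun j => v j ≠ 0)) (by simp)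
            (fun j => |v j| * (y j / v j))]
          · exact hSb
          · have hvj : v j ≠ 0 := by simpa using (Finset.mem_filter.mp hj).2
            have hc : v j * (v j)⁻¹ = 1 := mul_inv_cancel₀ hvj
            rcases lt_trichotomy (v j) 0 with hv1 | hv1 | hv1
            · rw [abs_of_neg hv1, Real.sign_of_neg hv1]
              linear_combination (y j) * hc
            · exact absurd hv1 hvj
            · rw [abs_of_pos hv1, Real.sign_of_pos hv1]
              linear_combination (-(y j)) * hc
        · intro i j huv
          have hui : u i ≠ 0 := left_ne_zero_of_mul huv
          have hvj : v j ≠ 0 := right_ne_zero_of_mul huv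
          have := hle ⟨i, hui⟩ ⟨j, hvj⟩
          rw [div_mul_div_comm] at this
          exact this
  · rintro (hA | ⟨hB, hy⟩ | ⟨hx, hCc⟩ | ⟨hd1, hd2, hd3, hd4, hd5⟩)
    · refine ⟨0, fun i j => ?_, by simp, by simp⟩
      rw [hA i j, sub_self]
      simpa using mem_signSet_zero (c := 0) (by norm_num)
    · subst hy; exact bwd_y0 hB
    · subst hx; exact isCrit_swap (bwd_y0 hCc)
    · refine ⟨fun i j => -(Real.sign (u i) * Real.sign (v j)), ?_, ?_, ?_⟩
      · intro i j
        dsimp only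
        by_cases hui : u i = 0
        · rw [hd4 i hui, hui, zero_mul, zero_mul, sub_self, Real.sign_zero, zero_mul, neg_zero]
          exact mem_signSet_zero (by norm_num)
        by_cases hvj : v j = 0
        · rw [hd5 j hvj, hvj, mul_zero, mul_zero, sub_self, Real.sign_zero, mul_zero, neg_zero]
          exact mem_signSet_zero (by norm_num)
        · have huv : u i * v j ≠ 0 := mul_ne_zero hui hvj
          have ht := hd3 i j huv
          have hdiff : x i * y j - u i * v j
              = (u i * v j) * (x i * y j / (u i * v j) - 1) := by field_simp
          rcases lt_or_eq_of_le ht with hlt | heq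
          · have hw : x i * y j / (u i * v j) - 1 < 0 := by linarith
            have e : -(Real.sign (u i) * Real.sign (v j))
                = Real.sign ((u i * v j) * (x i * y j / (u i * v j) - 1)) := by
              rw [real_sign_mul (u i * v j), Real.sign_of_neg hw, real_sign_mul]
              ring
            rw [hdiff, e]
            exact sign_mem_signSet _
          · rw [hdiff, ← heq, sub_self, mul_zero]
            apply mem_signSet_zero
            rw [abs_neg, abs_mul]
            calc |Real.sign (u i)| * |Real.sign (v j)| ≤ 1 * 1 :=
                mul_le_mul (abs_sign_le _) (abs_sign_le _) (abs_nonneg _) (by norm_num)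
              _ = 1 := by norm_num
      · intro i
        have e : ∀ j : Fin n, -(Real.sign (u i) * Real.sign (v j)) * y j
            = -Real.sign (u i) * (Real.sign (v j) * y j) := fun j => by ring
        rw [Finset.sum_congr rfl (fun j _ => e j), ← Finset.mul_sum]
        have esum : ∑ j, Real.sign (v j) * y j
            = ∑ j ∈ Finset.univ.filter (fun j => v j ≠ 0), Real.sign (v j) * y j := by
          symm
          apply Finset.sum_subset (Finset.filter_subset _ _)
          intro j _ hj
          have hvz : v j = 0 := by simpa using hj
          rw [hvz, Real.sign_zero, zero_mul]
        rw [esum, hd2, mul_zero]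
      · intro j
        have e : ∀ i : Fin m, -(Real.sign (u i) * Real.sign (v j)) * x i
            = -Real.sign (v j) * (Real.sign (u i) * x i) := fun i => by ring
        rw [Finset.sum_congr rfl (fun i _ => e i), ← Finset.mul_sum]
        have esum : ∑ i, Real.sign (u i) * x i
            = ∑ i ∈ Finset.univ.filter (fun i => u i ≠ 0), Real.sign (u i) * x i := by
          symm
          apply Finset.sum_subset (Finset.filter_subset _ _)
          intro i _ hi
          have huz : u i = 0 := by simpa using hi
          rw [huz, Real.sign_zero, zero_mul]
        rw [esum, hd1, mul_zero]
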